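/- Let H and K₀ be real separable Hilbert spaces, A and C positive bounded operators on H, V : K₀ → H an isometry (V^*V = I) such that P := V V^* is the orthogonal projection of H onto the closure of the range of C, μ > 0, and h_μ(A) := V (V^* A V + μ I)^{-1} V^*. Then ‖h_μ(A)(A + μI)‖ ≤ 1 + ‖(A + μI)^{1/2}(C + μI)^{-1/2}‖. -/

import Mathlib

open ContinuousLinearMap

/-- `S` is the positive square root of the positive operator `T`. -/
def IsSqrtOf {E : Type*} [NormedAddCommGroup E] [InnerProductSpace ℝ E]
    [CompleteSpace E] (S T : E →L[ℝ] E) : Prop :=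
  S.IsPositive ∧ S ∘L S = T

/-- `S` is the inverse `T⁻¹` of the operator `T`. -/
def IsInvOf {E : Type*} [NormedAddCommGroup E] [InnerProductSpace ℝ E]
    [CompleteSpace E] (S T : E →L[ℝ] E) : Prop :=
  S ∘L T = 1 ∧ T ∘L S = 1

/-- `S` is the inverse square root `T^{-1/2}` of the positive invertible operator `T`,
i.e. `S` is positive and `S ∘ S = T⁻¹`. -/
def IsInvSqrtOf {E : Type*} [NormedAddCommGroup E] [InnerProductSpace ℝ E]
    [CompleteSpace E] (S T : E →L[ℝ] E) : Prop :=
  S.IsPositive ∧ IsInvOf (S ∘L S) T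

/-- `p` is the family of real powers `t ↦ A ^ t` (for `t ≥ 0`) of the positive operator `A`,
given by the continuous functional calculus; it is characterized by the semigroup property
together with positivity, continuity, `p 0 = 1` and `p 1 = A`. -/
def IsPowerFamilyOf {E : Type*} [NormedAddCommGroup E] [InnerProductSpace ℝ E]
    [CompleteSpace E] (A : E →L[ℝ] E) (p : ℝ → E →L[ℝ] E) : Prop :=
  p 0 = 1 ∧ p 1 = A ∧ (∀ s t : ℝ, 0 ≤ s → 0 ≤ t → p (s + t) = p s ∘L p t) ∧
    (∀ t : ℝ, 0 ≤ t → (p t).IsPositive) ∧ ContinuousOn p (Set.Ici (0 : ℝ))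

local notation "⟪" x ", " y "⟫" => @inner ℝ _ _ x y

set_option maxHeartbeats 2000000 in
/-- For positive operators `A`, `C` on `H`, an isometry `V : K₀ → H` with
`V V^*` the orthogonal projection onto the closure of the range of `C`, `mu > 0` and
`h_mu(A) := V (V^* A V + mu I)⁻¹ V^*`, one has
`‖h_mu(A)(A + mu I)‖ ≤ 1 + ‖(A + mu I)^{1/2} (C + mu I)^{-1/2}‖`. -/
theorem stmt8 {H K₀ : Type*}
    [NormedAddCommGroup H] [InnerProductSpace ℝ H] [CompleteSpace H]
    [TopologicalSpace.SeparableSpace H]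
    [NormedAddCommGroup K₀] [InnerProductSpace ℝ K₀] [CompleteSpace K₀]
    [TopologicalSpace.SeparableSpace K₀]
    (A C : H →L[ℝ] H) (hA : A.IsPositive) (hC : C.IsPositive)
    (V : K₀ →L[ℝ] H) (hV : (adjoint V) ∘L V = 1)
    (hPrange : LinearMap.range ((V ∘L (adjoint V) : H →L[ℝ] H) : H →ₗ[ℝ] H) = (LinearMap.range (C : H →ₗ[ℝ] H)).topologicalClosure)
    (mu : ℝ) (hmu : 0 < mu)
    (Winv : K₀ →L[ℝ] K₀)
    (hWinv : IsInvOf Winv ((adjoint V) ∘L A ∘L V + mu • (1 : K₀ →L[ℝ] K₀)))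
    (SA : H →L[ℝ] H) (hSA : IsSqrtOf SA (A + mu • (1 : H →L[ℝ] H)))
    (SCinv : H →L[ℝ] H) (hSCinv : IsInvSqrtOf SCinv (C + mu • (1 : H →L[ℝ] H))) :
    ‖(V ∘L Winv ∘L (adjoint V)) ∘L (A + mu • (1 : H →L[ℝ] H))‖ ≤ 1 + ‖SA ∘L SCinv‖ := by
  obtain ⟨hSApos, hSAsq⟩ := hSA
  obtain ⟨hSCpos, hSCL, hSCR⟩ := hSCinv
  obtain ⟨hWL, hWR⟩ := hWinv
  -- pointwise facts
  have lV : ∀ x : K₀, adjoint V (V x) = x := by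
    intro x; have := ContinuousLinearMap.ext_iff.mp hV x
    simpa using this
  have lW1 : ∀ x : K₀, Winv (adjoint V (A (V x)) + mu • x) = x := by
    intro x; have := ContinuousLinearMap.ext_iff.mp hWL x
    simpa using this
  have lW2 : ∀ x : K₀, adjoint V (A (V (Winv x))) + mu • Winv x = x := by
    intro x; have := ContinuousLinearMap.ext_iff.mp hWR x
    simpa using this
  have lSA : ∀ x : H, SA (SA x) = A x + mu • x := by
    intro x; have := ContinuousLinearMap.ext_iff.mp hSAsq x
    simpa using this
  have lSC : ∀ x : H, SCinv (SCinv (C x + mu • x)) = x := by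
    intro x; have := ContinuousLinearMap.ext_iff.mp hSCL x
    simpa using this
  have symC : ∀ x y : H, ⟪C x, y⟫ = ⟪x, C y⟫ := by
    intro x y
    conv_lhs => rw [← isSelfAdjoint_iff'.mp hC.isSelfAdjoint]
    exact adjoint_inner_left C y x
  have symSC : ∀ x y : H, ⟪SCinv x, y⟫ = ⟪x, SCinv y⟫ := by
    intro x y
    conv_lhs => rw [← isSelfAdjoint_iff'.mp hSCpos.isSelfAdjoint]
    exact adjoint_inner_left SCinv y x
  -- adjoint V kills (1 - P)
  have lzero : ∀ x : H, adjoint V (x - V (adjoint V x)) = 0 := by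
    intro x; simp [map_sub, lV]
  have lperp : ∀ x u : H, ⟪x - V (adjoint V x), C u⟫ = 0 := by
    intro x u
    have hmem : C u ∈ LinearMap.range ((V ∘L adjoint V : H →L[ℝ] H) : H →ₗ[ℝ] H) := by
      rw [hPrange]
      exact Submodule.le_topologicalClosure _ ⟨u, rfl⟩
    obtain ⟨z, hz⟩ := hmem
    have hz' : V (adjoint V z) = C u := by simpa using hz
    rw [← hz', ← adjoint_inner_left V, lzero, inner_zero_left]
  have lC : ∀ x : H, C (x - V (adjoint V x)) = 0 := by
    intro x
    have h0 : ⟪C (x - V (adjoint V x)), C (x - V (adjoint V x))⟫ = 0 := by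
      rw [symC]; exact lperp x _
    exact inner_self_eq_zero.mp h0
  have lSCC : ∀ x : H, SCinv (SCinv (x - V (adjoint V x)))
      = mu⁻¹ • (x - V (adjoint V x)) := by
    intro x
    have h1 : C (x - V (adjoint V x)) + mu • (x - V (adjoint V x))
        = mu • (x - V (adjoint V x)) := by rw [lC x, zero_add]
    have h2 : SCinv (SCinv (mu • (x - V (adjoint V x)))) = x - V (adjoint V x) := by
      rw [← h1]; exact lSC _
    have h3 : mu • SCinv (SCinv (x - V (adjoint V x))) = x - V (adjoint V x) := by
      simpa [map_smul] using h2
    calc SCinv (SCinv (x - V (adjoint V x)))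
        = mu⁻¹ • (mu • SCinv (SCinv (x - V (adjoint V x)))) := by
          rw [smul_smul, inv_mul_cancel₀ hmu.ne', one_smul]
      _ = mu⁻¹ • (x - V (adjoint V x)) := by rw [h3]
  -- h B P = P pointwise
  have hBP : ∀ x : H, V (Winv (adjoint V (A (V (adjoint V x)) + mu • V (adjoint V x))))
      = V (adjoint V x) := by
    intro x
    have e : adjoint V (A (V (adjoint V x)) + mu • V (adjoint V x))
        = adjoint V (A (V (adjoint V x))) + mu • adjoint V x := by
      rw [map_add, map_smul, lV]
    rw [e, lW1]
  -- the key decomposition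
  have key : (V ∘L Winv ∘L (adjoint V)) ∘L (A + mu • (1 : H →L[ℝ] H))
      = V ∘L (adjoint V)
        + mu • (((V ∘L Winv ∘L (adjoint V)) ∘L SA)
            ∘L ((SA ∘L SCinv)
            ∘L (SCinv ∘L ((1 : H →L[ℝ] H) - V ∘L (adjoint V))))) := by
    ext x
    simp only [comp_apply, add_apply, smul_apply, one_apply_eq_self, sub_apply,
      coe_smul', Pi.smul_apply, coe_sub', Pi.sub_apply]
    rw [lSCC x]
    simp only [map_smul]
    rw [lSA]
    rw [smul_smul, mul_inv_cancel₀ hmu.ne', one_smul]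
    have e1 : A (x - V (adjoint V x)) + mu • (x - V (adjoint V x))
        = (A x + mu • x) - (A (V (adjoint V x)) + mu • V (adjoint V x)) := by
      simp only [map_sub, smul_sub]; abel
    rw [e1, map_sub (adjoint V), map_sub Winv, map_sub V, hBP x]
    abel
  -- norm facts
  have nVx : ∀ x : K₀, ‖V x‖ = ‖x‖ := by
    intro x
    have h1 : ⟪V x, V x⟫ = ⟪x, x⟫ := by
      rw [← adjoint_inner_left V x (V x), lV]
    rw [real_inner_self_eq_norm_mul_norm, real_inner_self_eq_norm_mul_norm] at h1
    nlinarith [norm_nonneg (V x), norm_nonneg x]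
  have nV1 : ‖V‖ ≤ 1 := opNorm_le_bound _ zero_le_one fun x => by rw [nVx x, one_mul]
  have nVadj1 : ‖adjoint V‖ ≤ 1 := by
    rw [LinearIsometryEquiv.norm_map]; exact nV1
  have nVadjx : ∀ x : H, ‖adjoint V x‖ ≤ ‖x‖ := by
    intro x
    calc ‖adjoint V x‖ ≤ ‖adjoint V‖ * ‖x‖ := le_opNorm _ _
      _ ≤ 1 * ‖x‖ := mul_le_mul_of_nonneg_right nVadj1 (norm_nonneg x)
      _ = ‖x‖ := one_mul _
  have nW : ∀ z : K₀, mu * ‖Winv z‖ ≤ ‖z‖ := by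
    intro z
    have hApos : 0 ≤ ⟪A (V (Winv z)), V (Winv z)⟫ := by
      have := hA.2 (V (Winv z))
      simpa [reApplyInnerSelf] using this
    have hinner : mu * (‖Winv z‖ * ‖Winv z‖) ≤ ⟪z, Winv z⟫ := by
      have e : ⟪adjoint V (A (V (Winv z))), Winv z⟫ + mu * ⟪Winv z, Winv z⟫
          = ⟪z, Winv z⟫ := by
        rw [← real_inner_smul_left, ← inner_add_left, lW2 z]
      rw [← e, adjoint_inner_left, real_inner_self_eq_norm_mul_norm]
      linarith
    have hcs : ⟪z, Winv z⟫ ≤ ‖z‖ * ‖Winv z‖ := real_inner_le_norm _ _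
    rcases (norm_nonneg (Winv z)).eq_or_lt with h0 | h0
    · rw [← h0, mul_zero]; exact norm_nonneg z
    · nlinarith
  have nhop : ‖V ∘L Winv ∘L adjoint V‖ ≤ mu⁻¹ := by
    refine opNorm_le_bound _ (by positivity) fun x => ?_
    simp only [comp_apply]
    calc ‖V (Winv (adjoint V x))‖ = ‖Winv (adjoint V x)‖ := nVx _
      _ ≤ mu⁻¹ * ‖adjoint V x‖ := by
          have := nW (adjoint V x)
          rw [inv_mul_eq_div, le_div_iff₀' hmu]
          exact this
      _ ≤ mu⁻¹ * ‖x‖ := by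
          have := nVadjx x
          have h0 : (0:ℝ) ≤ mu⁻¹ := by positivity
          exact mul_le_mul_of_nonneg_left this h0
  -- self-adjointness of Winv
  have hKsa : IsSelfAdjoint ((adjoint V) ∘L A ∘L V + mu • (1 : K₀ →L[ℝ] K₀)) := by
    have h1 : ((adjoint V) ∘L A ∘L V).IsPositive := by
      have := hA.conj_adjoint (adjoint V)
      rwa [adjoint_adjoint] at this
    have h2 : (mu • (1 : K₀ →L[ℝ] K₀)).IsPositive := by
      constructor
      · rw [← ContinuousLinearMap.isSelfAdjoint_iff_isSymmetric, isSelfAdjoint_iff']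
        ext z
        refine ext_inner_right ℝ fun y => ?_
        rw [adjoint_inner_left]
        simp [real_inner_smul_left, real_inner_smul_right]
      · intro z
        have : (mu • (1 : K₀ →L[ℝ] K₀)).reApplyInnerSelf z = mu * ‖z‖ ^ 2 := by
          simp [reApplyInnerSelf, real_inner_smul_left, real_inner_self_eq_norm_sq]
        rw [this]; positivity
    exact (h1.add h2).isSelfAdjoint
  have hWsa : adjoint Winv = Winv := by
    have hK : adjoint ((adjoint V) ∘L A ∘L V + mu • (1 : K₀ →L[ℝ] K₀))
        = (adjoint V) ∘L A ∘L V + mu • (1 : K₀ →L[ℝ] K₀) := isSelfAdjoint_iff'.mp hKsa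
    have h1 : adjoint Winv ∘L ((adjoint V) ∘L A ∘L V + mu • (1 : K₀ →L[ℝ] K₀)) = 1 := by
      have := congrArg adjoint hWR
      have hone : adjoint (1 : K₀ →L[ℝ] K₀) = 1 := by
        rw [← star_eq_adjoint]; exact star_one _
      rwa [adjoint_comp, hK, hone] at this
    calc adjoint Winv
        = adjoint Winv ∘L (((adjoint V) ∘L A ∘L V + mu • (1 : K₀ →L[ℝ] K₀)) ∘L Winv) := by
          rw [hWR]; ext z; simp
      _ = (adjoint Winv ∘L ((adjoint V) ∘L A ∘L V + mu • (1 : K₀ →L[ℝ] K₀))) ∘L Winv := rfl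
      _ = Winv := by rw [h1]; ext z; simp
  have hhadj : adjoint (V ∘L Winv ∘L adjoint V) = V ∘L Winv ∘L adjoint V := by
    simp only [adjoint_comp, adjoint_adjoint, hWsa, comp_assoc]
  -- the C*-identity step : ‖T₁‖² = ‖h‖
  have hhh : (((V ∘L Winv ∘L adjoint V) ∘L SA)
      ∘L (SA ∘L (V ∘L Winv ∘L adjoint V))) = V ∘L Winv ∘L adjoint V := by
    ext x
    simp only [comp_apply]
    rw [lSA]
    rw [map_add (adjoint V), map_smul (adjoint V), lV, lW2]
  have hT1adj : adjoint (SA ∘L (V ∘L Winv ∘L adjoint V))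
      = (V ∘L Winv ∘L adjoint V) ∘L SA := by
    rw [adjoint_comp, hhadj, isSelfAdjoint_iff'.mp hSApos.isSelfAdjoint]
  have hT1sq : ‖(V ∘L Winv ∘L adjoint V) ∘L SA‖ * ‖(V ∘L Winv ∘L adjoint V) ∘L SA‖
      ≤ mu⁻¹ := by
    have e1 := norm_adjoint_comp_self (SA ∘L (V ∘L Winv ∘L adjoint V))
    rw [hT1adj, hhh] at e1
    have e2 : ‖(V ∘L Winv ∘L adjoint V) ∘L SA‖ = ‖SA ∘L (V ∘L Winv ∘L adjoint V)‖ := by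
      rw [← hT1adj, LinearIsometryEquiv.norm_map]
    rw [e2, ← e1]
    exact nhop
  -- bound on SCinv ∘ (1 - P)
  have nY : ∀ x : H, ‖x - V (adjoint V x)‖ ≤ ‖x‖ := by
    intro x
    have h1 : ⟪x - V (adjoint V x), x - V (adjoint V x)⟫
        = ⟪x, x - V (adjoint V x)⟫ := by
      have h2 : ⟪V (adjoint V x), x - V (adjoint V x)⟫ = 0 := by
        rw [← adjoint_inner_right V, lzero, inner_zero_right]
      rw [inner_sub_left, h2, sub_zero]
    have h3 : ‖x - V (adjoint V x)‖ * ‖x - V (adjoint V x)‖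
        ≤ ‖x‖ * ‖x - V (adjoint V x)‖ := by
      rw [← real_inner_self_eq_norm_mul_norm, h1]
      exact real_inner_le_norm _ _
    rcases (norm_nonneg (x - V (adjoint V x))).eq_or_lt with h0 | h0
    · rw [← h0]; exact norm_nonneg x
    · exact le_of_mul_le_mul_right h3 h0
  have nT3x : ∀ x : H, ‖SCinv (x - V (adjoint V x))‖ * ‖SCinv (x - V (adjoint V x))‖
      ≤ mu⁻¹ * (‖x‖ * ‖x‖) := by
    intro x
    have h1 : ⟪SCinv (x - V (adjoint V x)), SCinv (x - V (adjoint V x))⟫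
        = mu⁻¹ * ⟪x - V (adjoint V x), x - V (adjoint V x)⟫ := by
      rw [symSC, lSCC, real_inner_smul_right]
    rw [← real_inner_self_eq_norm_mul_norm, h1, real_inner_self_eq_norm_mul_norm]
    have h2 := nY x
    have h0 : (0:ℝ) ≤ mu⁻¹ := by positivity
    have h3 : ‖x - V (adjoint V x)‖ * ‖x - V (adjoint V x)‖ ≤ ‖x‖ * ‖x‖ :=
      mul_le_mul h2 h2 (norm_nonneg _) (norm_nonneg _)
    exact mul_le_mul_of_nonneg_left h3 h0
  have nT3 : ‖SCinv ∘L ((1 : H →L[ℝ] H) - V ∘L adjoint V)‖ ≤ Real.sqrt mu⁻¹ := by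
    refine opNorm_le_bound _ (Real.sqrt_nonneg _) fun x => ?_
    simp only [comp_apply, sub_apply, one_apply, coe_sub', Pi.sub_apply]
    have h1 := nT3x x
    have hs : Real.sqrt mu⁻¹ * Real.sqrt mu⁻¹ = mu⁻¹ :=
      Real.mul_self_sqrt (by positivity)
    calc ‖SCinv (x - V (adjoint V x))‖
        = Real.sqrt (‖SCinv (x - V (adjoint V x))‖ * ‖SCinv (x - V (adjoint V x))‖) :=
          (Real.sqrt_mul_self (norm_nonneg _)).symm
      _ ≤ Real.sqrt (mu⁻¹ * (‖x‖ * ‖x‖)) := Real.sqrt_le_sqrt h1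
      _ = Real.sqrt mu⁻¹ * ‖x‖ := by
          rw [Real.sqrt_mul (by positivity), Real.sqrt_mul_self (norm_nonneg x)]
  have hT3sq : ‖SCinv ∘L ((1 : H →L[ℝ] H) - V ∘L adjoint V)‖
      * ‖SCinv ∘L ((1 : H →L[ℝ] H) - V ∘L adjoint V)‖ ≤ mu⁻¹ := by
    have hs : Real.sqrt mu⁻¹ * Real.sqrt mu⁻¹ = mu⁻¹ :=
      Real.mul_self_sqrt (by positivity)
    nlinarith [opNorm_nonneg (SCinv ∘L ((1 : H →L[ℝ] H) - V ∘L adjoint V)),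
      Real.sqrt_nonneg mu⁻¹]
  -- ‖P‖ ≤ 1
  have nP : ‖V ∘L adjoint V‖ ≤ 1 := by
    refine opNorm_le_bound _ zero_le_one fun x => ?_
    simp only [comp_apply]
    rw [nVx, one_mul]
    exact nVadjx x
  -- assemble
  rw [key]
  refine le_trans (norm_add_le _ _) ?_
  have hb : ‖mu • (((V ∘L Winv ∘L (adjoint V)) ∘L SA)
      ∘L ((SA ∘L SCinv)
      ∘L (SCinv ∘L ((1 : H →L[ℝ] H) - V ∘L (adjoint V)))))‖ ≤ ‖SA ∘L SCinv‖ := by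
    refine le_trans (opNorm_smul_le mu _) ?_
    rw [Real.norm_eq_abs, abs_of_pos hmu]
    set a := ‖(V ∘L Winv ∘L (adjoint V)) ∘L SA‖ with ha
    set b := ‖SA ∘L SCinv‖ with hbdef
    set c := ‖SCinv ∘L ((1 : H →L[ℝ] H) - V ∘L (adjoint V))‖ with hcdef
    have habc : ‖((V ∘L Winv ∘L (adjoint V)) ∘L SA)
        ∘L ((SA ∘L SCinv)
        ∘L (SCinv ∘L ((1 : H →L[ℝ] H) - V ∘L (adjoint V))))‖ ≤ a * (b * c) := by
      refine le_trans (opNorm_comp_le _ _) ?_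
      have := opNorm_comp_le (SA ∘L SCinv) (SCinv ∘L ((1 : H →L[ℝ] H) - V ∘L (adjoint V)))
      have ha0 : 0 ≤ a := opNorm_nonneg _
      exact mul_le_mul_of_nonneg_left this ha0
    have hmu1 : mu * mu⁻¹ = 1 := mul_inv_cancel₀ hmu.ne'
    have ha0 : 0 ≤ a := opNorm_nonneg _
    have hb0 : 0 ≤ b := opNorm_nonneg _
    have hc0 : 0 ≤ c := opNorm_nonneg _
    have hac : a * c ≤ mu⁻¹ := by nlinarith [sq_nonneg (a - c), hT1sq, hT3sq]
    calc mu * ‖((V ∘L Winv ∘L (adjoint V)) ∘L SA)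
        ∘L ((SA ∘L SCinv)
        ∘L (SCinv ∘L ((1 : H →L[ℝ] H) - V ∘L (adjoint V))))‖
        ≤ mu * (a * (b * c)) := mul_le_mul_of_nonneg_left habc hmu.le
      _ = (mu * (a * c)) * b := by ring
      _ ≤ (mu * mu⁻¹) * b := by
          have : mu * (a * c) ≤ mu * mu⁻¹ := mul_le_mul_of_nonneg_left hac hmu.le
          exact mul_le_mul_of_nonneg_right this hb0
      _ = b := by rw [hmu1, one_mul]
  linarith [nP, hb]
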